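/- arXiv:1302.6670 — 3 statements merged into one kernel-verified Lean document; each statement's English description precedes it below -/
import Mathlib

section
/- Let n ≥ 1, let x₀ ∈ ℝⁿ, let ρ > 0 and L > 0, and let h : ℝⁿ → ℝ be L-Lipschitz on the closed ball of radius ρ centered at x₀. If |h(x₀)| ≤ 2·L·ρ, then |h(x₀)|^{n+1} ≤ 2^{n+1} · Lⁿ · (vol(B₁))⁻¹ · ∫_{B_ρ(x₀)} |h(x)| dx, where vol(B₁) denotes the Lebesgue measure of the unit ball in ℝⁿ and the integral is with respect to Lebesgue measure. -/
open MeasureTheory Metric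

theorem lipschitz_L1_pointwise_bound
    {n : ℕ} (hn : 1 ≤ n) (x₀ : EuclideanSpace ℝ (Fin n)) (ρ L : ℝ)
    (hρ : 0 < ρ) (hL : 0 < L) (h : EuclideanSpace ℝ (Fin n) → ℝ)
    (hLip : ∀ x ∈ closedBall x₀ ρ, ∀ y ∈ closedBall x₀ ρ,
      |h x - h y| ≤ L * ‖x - y‖)
    (hsmall : |h x₀| ≤ 2 * L * ρ) :
    |h x₀| ^ (n + 1) ≤
      2 ^ (n + 1) * L ^ n *
        (volume (ball (0 : EuclideanSpace ℝ (Fin n)) 1)).toReal⁻¹ *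
        ∫ x in ball x₀ ρ, |h x| := by
  haveI : Nontrivial (EuclideanSpace ℝ (Fin n)) := by
    have : 0 < n := hn
    refine ⟨EuclideanSpace.single ⟨0, this⟩ 1, 0, fun hcon => ?_⟩
    have := congrArg (fun v : EuclideanSpace ℝ (Fin n) => v ⟨0, this⟩) hcon
    simp [EuclideanSpace.single] at this
  set V := (volume (ball (0 : EuclideanSpace ℝ (Fin n)) 1)).toReal with hV
  have hVpos : 0 < V :=
    ENNReal.toReal_pos (measure_ball_pos _ _ one_pos).ne' measure_ball_lt_top.ne
  -- continuity and integrability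
  have hcont : ContinuousOn h (closedBall x₀ ρ) := by
    intro x hx
    refine Metric.continuousWithinAt_iff.2 fun ε hε => ⟨ε / L, by positivity, fun y hy hd => ?_⟩
    calc dist (h y) (h x) ≤ L * ‖y - x‖ := by
          simpa [Real.dist_eq] using hLip y hy x hx
      _ < L * (ε / L) := by
          apply mul_lt_mul_of_pos_left _ hL
          rwa [← dist_eq_norm]
      _ = ε := by field_simp
  have hint : IntegrableOn (fun x => |h x|) (ball x₀ ρ) volume := by
    have : IntegrableOn (fun x => |h x|) (closedBall x₀ ρ) volume :=
      hcont.abs.integrableOn_compact (isCompact_closedBall _ _)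
    exact this.mono_set ball_subset_closedBall
  have hInonneg : (0:ℝ) ≤ ∫ x in ball x₀ ρ, |h x| :=
    integral_nonneg fun x => abs_nonneg _
  rcases eq_or_lt_of_le (abs_nonneg (h x₀)) with h0 | h0
  · rw [← h0, zero_pow (by omega)]
    positivity
  -- main case
  set r := |h x₀| / (2 * L) with hr
  have hrpos : 0 < r := by positivity
  have hrρ : r ≤ ρ := by
    rw [hr, div_le_iff₀ (by positivity)]
    linarith [hsmall]
  have hball : ball x₀ r ⊆ closedBall x₀ ρ :=
    (ball_subset_ball hrρ).trans ball_subset_closedBall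
  have hlow : ∀ x ∈ ball x₀ r, |h x₀| / 2 ≤ |h x| := by
    intro x hx
    have hxρ : x ∈ closedBall x₀ ρ := hball hx
    have h1 : |h x₀ - h x| ≤ L * ‖x₀ - x‖ :=
      hLip x₀ (mem_closedBall_self hρ.le) x hxρ
    have h2 : ‖x₀ - x‖ ≤ r := by
      rw [← dist_eq_norm, dist_comm]
      exact (mem_ball.1 hx).le
    have h3 : |h x₀| - |h x| ≤ L * r :=
      le_trans (le_trans (abs_sub_abs_le_abs_sub _ _) h1)
        (mul_le_mul_of_nonneg_left h2 hL.le)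
    have : L * r = |h x₀| / 2 := by
      rw [hr]; field_simp
    linarith
  have hmeas : volume (ball x₀ r) = ENNReal.ofReal (r ^ n) * volume (ball (0 : EuclideanSpace ℝ (Fin n)) 1) := by
    rw [Measure.addHaar_ball volume x₀ hrpos.le, finrank_euclideanSpace_fin]
  have hmeasR : (volume (ball x₀ r)).toReal = r ^ n * V := by
    rw [hmeas, ENNReal.toReal_mul, ENNReal.toReal_ofReal (by positivity)]
  have key : |h x₀| / 2 * (r ^ n * V) ≤ ∫ x in ball x₀ r, |h x| := by
    rw [← hmeasR]
    exact setIntegral_ge_of_const_le_real measurableSet_ball measure_ball_lt_top.ne hlow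
      (hint.mono_set (ball_subset_ball hrρ))
  have mono : (∫ x in ball x₀ r, |h x|) ≤ ∫ x in ball x₀ ρ, |h x| := by
    apply setIntegral_mono_set hint
    · exact Filter.Eventually.of_forall fun x => abs_nonneg _
    · exact HasSubset.Subset.eventuallyLE (ball_subset_ball hrρ)
  have final : |h x₀| ^ (n + 1) = 2 ^ (n + 1) * L ^ n * V⁻¹ * (|h x₀| / 2 * (r ^ n * V)) := by
    rw [hr]
    field_simp
    rw [div_pow, mul_pow]
    field_simp
    ring
  rw [final]
  have hc : (0:ℝ) < 2 ^ (n + 1) * L ^ n * V⁻¹ := by positivity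
  exact mul_le_mul_of_nonneg_left (key.trans mono) hc.le
end

section
/- Let n ≥ 1 and C > 0, and let h : ℝⁿ → ℝ be a function which is differentiable at every point x with 0 < |x| < 1 and satisfies |∇h(x)| ≤ C/|x| for all 0 < |x| < 1, as well as |h(x)| ≤ C for all 0 < |x| < 1. Assume that r^{−n} ∫_{{x : r < |x| < 2r}} |h(x)| dx → 0 as r → 0⁺. Then h(x) → 0 as x → 0 (i.e., for every ε > 0 there is δ > 0 such that |h(x)| < ε whenever 0 < |x| < δ). -/
open MeasureTheory Metric Filter

theorem h_tendsto_zero_at_origin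
    {n : ℕ} (hn : 1 ≤ n) (C : ℝ) (hC : 0 < C)
    (h : EuclideanSpace ℝ (Fin n) → ℝ)
    (hdiff : ∀ x : EuclideanSpace ℝ (Fin n), 0 < ‖x‖ → ‖x‖ < 1 → DifferentiableAt ℝ h x)
    (hgrad : ∀ x : EuclideanSpace ℝ (Fin n), 0 < ‖x‖ → ‖x‖ < 1 → ‖fderiv ℝ h x‖ ≤ C / ‖x‖)
    (hbd : ∀ x : EuclideanSpace ℝ (Fin n), 0 < ‖x‖ → ‖x‖ < 1 → |h x| ≤ C)
    (hint : Tendsto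
      (fun r : ℝ =>
        (∫ x in {x : EuclideanSpace ℝ (Fin n) | r < ‖x‖ ∧ ‖x‖ < 2 * r}, |h x|) / r ^ n)
      (nhdsWithin 0 (Set.Ioi 0)) (nhds 0)) :
    ∀ ε > 0, ∃ δ > 0, ∀ x : EuclideanSpace ℝ (Fin n),
      0 < ‖x‖ → ‖x‖ < δ → |h x| < ε := by
  by_contra hcon
  push_neg at hcon
  obtain ⟨ε, hε, hεx⟩ := hcon
  -- constants
  set m : ℝ := min (4:ℝ)⁻¹ (ε / (2*C)) with hm_def
  have hm0 : 0 < m := lt_min (by norm_num) (by positivity)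
  have hm4 : m ≤ 4⁻¹ := min_le_left _ _
  have hmε : m ≤ ε / (2*C) := min_le_right _ _
  set V : ℝ := (volume (ball (0:EuclideanSpace ℝ (Fin n)) 1)).toReal with hV_def
  have hV0 : 0 < V :=
    ENNReal.toReal_pos (measure_ball_pos _ _ one_pos).ne' measure_ball_lt_top.ne
  set c : ℝ := ε/2 * m^n * V with hc_def
  have hc0 : 0 < c := by positivity
  have hev : ∀ᶠ r in nhdsWithin 0 (Set.Ioi 0),
      (∫ x in {x : EuclideanSpace ℝ (Fin n) | r < ‖x‖ ∧ ‖x‖ < 2*r}, |h x|) / r^n < c :=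
    hint.eventually (Filter.Tendsto.eventually_lt_const hc0 tendsto_id)
  rw [eventually_nhdsWithin_iff, Metric.eventually_nhds_iff] at hev
  obtain ⟨δ₀, hδ₀, hev⟩ := hev
  obtain ⟨x, hx0, hxδ, hxh⟩ := hεx (min ((3/4)*δ₀) (1/2)) (by positivity)
  have hxδ₀ : ‖x‖ < (3/4)*δ₀ := lt_of_lt_of_le hxδ (min_le_left _ _)
  have hxhalf : ‖x‖ < 1/2 := lt_of_lt_of_le hxδ (min_le_right _ _)
  set r : ℝ := (2/3) * ‖x‖ with hr_def
  have hr0 : 0 < r := by positivity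
  have hxr : ‖x‖ = (3/2) * r := by rw [hr_def]; ring
  have hr1 : 2*r < 1 := by rw [hr_def]; linarith
  have hrδ₀ : r < δ₀ := by rw [hr_def]; linarith
  have hfin := hev (y := r) (by rw [Real.dist_eq, sub_zero, abs_of_pos hr0]; exact hrδ₀)
    (Set.mem_Ioi.mpr hr0)
  set ρ : ℝ := m * r with hρ_def
  have hρ0 : 0 < ρ := by positivity
  have hρr : ρ ≤ 4⁻¹ * r := by
    rw [hρ_def]
    exact mul_le_mul_of_nonneg_right hm4 hr0.le
  set A : Set (EuclideanSpace ℝ (Fin n)) := {y | r < ‖y‖ ∧ ‖y‖ < 2*r} with hA_def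
  -- the closed ball around x is inside the annulus
  have hball_sub : closedBall x ρ ⊆ A := by
    intro y hy
    have hd : ‖y - x‖ ≤ ρ := mem_closedBall_iff_norm.mp hy
    have h1 : ‖x‖ - ‖y‖ ≤ ‖y - x‖ := by
      have := norm_sub_norm_le x y
      rwa [norm_sub_rev] at this
    have h2 : ‖y‖ ≤ ‖y - x‖ + ‖x‖ := by
      have := norm_add_le (y - x) x
      simpa using this
    exact ⟨by nlinarith, by nlinarith⟩
  -- points of the ball are in the good region
  have hreg : ∀ z ∈ closedBall x ρ, 0 < ‖z‖ ∧ ‖z‖ < 1 := by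
    intro z hz
    obtain ⟨h1, h2⟩ := hball_sub hz
    exact ⟨hr0.trans h1, h2.trans hr1⟩
  -- mean value inequality
  have hMVT : ∀ y ∈ closedBall x ρ, |h y - h x| ≤ (C/r) * ‖y - x‖ := by
    intro y hy
    have := (convex_closedBall x ρ).norm_image_sub_le_of_norm_fderiv_le
      (f := h) (C := C/r)
      (fun z hz => hdiff z (hreg z hz).1 (hreg z hz).2)
      (fun z hz => le_trans (hgrad z (hreg z hz).1 (hreg z hz).2)
        (div_le_div_of_nonneg_left hC.le hr0 (hball_sub hz).1.le))
      (mem_closedBall_self hρ0.le) hy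
    simpa [Real.norm_eq_abs] using this
  have hCm : C/r * ρ ≤ ε/2 := by
    have h1 : C / r * ρ = C * m := by rw [hρ_def]; field_simp
    rw [h1]
    calc C * m ≤ C * (ε/(2*C)) := mul_le_mul_of_nonneg_left hmε hC.le
      _ = ε/2 := by field_simp
  have hlow : ∀ y ∈ closedBall x ρ, ε/2 ≤ |h y| := by
    intro y hy
    have h1 := hMVT y hy
    have h2 : ‖y - x‖ ≤ ρ := mem_closedBall_iff_norm.mp hy
    have h3 : (C/r) * ‖y - x‖ ≤ ε/2 := by
      refine le_trans ?_ hCm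
      exact mul_le_mul_of_nonneg_left h2 (div_nonneg hC.le hr0.le)
    have h4 : |h x| - |h y| ≤ |h x - h y| := abs_sub_abs_le_abs_sub _ _
    rw [abs_sub_comm] at h4
    linarith [hxh]
  -- measurability and integrability
  have measA : MeasurableSet A := by
    have : A = (fun y : EuclideanSpace ℝ (Fin n) => ‖y‖) ⁻¹' Set.Ioo r (2*r) := rfl
    rw [this]; exact measurable_norm measurableSet_Ioo
  have hAfin : volume A ≠ ⊤ := by
    refine ne_top_of_le_ne_top (measure_ball_lt_top (x := (0:EuclideanSpace ℝ (Fin n)))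
      (r := 2*r)).ne (measure_mono ?_)
    intro y hy; exact mem_ball_zero_iff.mpr hy.2
  have hcontA : ContinuousOn (fun y => |h y|) A := fun y hy =>
    ((hdiff y (hr0.trans hy.1) (hy.2.trans hr1)).continuousAt.continuousWithinAt).abs
  have hintA : IntegrableOn (fun y => |h y|) A := by
    refine ⟨hcontA.aestronglyMeasurable measA, ?_⟩
    refine HasFiniteIntegral.restrict_of_bounded (C := C) hAfin.lt_top ?_
    filter_upwards [ae_restrict_mem measA] with y hy
    rw [Real.norm_eq_abs, abs_abs]
    exact hbd y (hr0.trans hy.1) (hy.2.trans hr1)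
  have hmono : ∫ y in closedBall x ρ, |h y| ≤ ∫ y in A, |h y| :=
    setIntegral_mono_set hintA (ae_of_all _ fun y => abs_nonneg _)
      (HasSubset.Subset.eventuallyLE hball_sub)
  have hcb_int : IntegrableOn (fun y => |h y|) (closedBall x ρ) :=
    hintA.mono_set hball_sub
  have hge : ε/2 * (volume (closedBall x ρ)).toReal ≤ ∫ y in closedBall x ρ, |h y| :=
    setIntegral_ge_of_const_le_real measurableSet_closedBall measure_closedBall_lt_top.ne
      hlow hcb_int
  have hvol : (volume (closedBall x ρ)).toReal = ρ^n * V := by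
    rw [Measure.addHaar_closedBall _ _ hρ0.le, finrank_euclideanSpace_fin,
      ENNReal.toReal_mul, ENNReal.toReal_ofReal (by positivity)]
  have hrn : 0 < r^n := pow_pos hr0 n
  have hkey : c * r^n ≤ ∫ y in A, |h y| := by
    have hρn : ρ^n = m^n * r^n := by rw [hρ_def, mul_pow]
    calc c * r^n = ε/2 * (ρ^n * V) := by rw [hc_def, hρn]; ring
      _ ≤ ∫ y in closedBall x ρ, |h y| := by rw [← hvol]; exact hge
      _ ≤ ∫ y in A, |h y| := hmono
  have : c ≤ (∫ y in A, |h y|) / r^n := (le_div_iff₀ hrn).mpr hkey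
  linarith
end

section
/- Let n ≥ 1 and R > 0, and let v : ℝⁿ → ℝ be continuous on the open ball B_R(0) and satisfy the super-mean-value property on B_R(0): for every closed ball B̄_ρ(y) ⊆ B_R(0), v(y) ≥ (vol(B_ρ(y)))⁻¹ ∫_{B_ρ(y)} v(x) dx. Define the maximal radial function ṽ on B_R(0) by ṽ(x) = inf{v(y) : |y| = |x|}. Then ṽ is continuous on B_R(0) and satisfies the super-mean-value property on B_R(0): for every closed ball B̄_ρ(y) ⊆ B_R(0), ṽ(y) ≥ (vol(B_ρ(y)))⁻¹ ∫_{B_ρ(y)} ṽ(x) dx. -/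
open MeasureTheory Metric

theorem maximal_radial_function_superMeanValue
    {n : ℕ} (hn : 1 ≤ n) (R : ℝ) (hR : 0 < R)
    (v : EuclideanSpace ℝ (Fin n) → ℝ)
    (hcont : ContinuousOn v (ball (0 : EuclideanSpace ℝ (Fin n)) R))
    (hsmv : ∀ (y : EuclideanSpace ℝ (Fin n)) (ρ : ℝ), 0 < ρ →
      closedBall y ρ ⊆ ball (0 : EuclideanSpace ℝ (Fin n)) R →
      (volume (ball y ρ)).toReal⁻¹ * ∫ x in ball y ρ, v x ≤ v y)
    (vTilde : EuclideanSpace ℝ (Fin n) → ℝ)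
    (hvTilde : ∀ x, vTilde x = sInf (v '' {y : EuclideanSpace ℝ (Fin n) | ‖y‖ = ‖x‖})) :
    ContinuousOn vTilde (ball (0 : EuclideanSpace ℝ (Fin n)) R) ∧
      ∀ (y : EuclideanSpace ℝ (Fin n)) (ρ : ℝ), 0 < ρ →
        closedBall y ρ ⊆ ball (0 : EuclideanSpace ℝ (Fin n)) R →
        (volume (ball y ρ)).toReal⁻¹ * ∫ x in ball y ρ, vTilde x ≤ vTilde y := by
  classical
  -- a unit vector
  obtain ⟨u, hu⟩ : ∃ u : EuclideanSpace ℝ (Fin n), ‖u‖ = 1 :=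
    ⟨EuclideanSpace.single ⟨0, hn⟩ (1 : ℝ), by
      simp [EuclideanSpace.norm_single]⟩
  have hset : ∀ x : EuclideanSpace ℝ (Fin n),
      {y : EuclideanSpace ℝ (Fin n) | ‖y‖ = ‖x‖}
        = sphere (0 : EuclideanSpace ℝ (Fin n)) ‖x‖ := by
    intro x; ext z; simp [mem_sphere_zero_iff_norm]
  have hne : ∀ r : ℝ, 0 ≤ r → (sphere (0 : EuclideanSpace ℝ (Fin n)) r).Nonempty := by
    intro r hr
    exact ⟨r • u, by simp [mem_sphere_zero_iff_norm, norm_smul, hu, abs_of_nonneg hr]⟩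
  have hcpt : ∀ r : ℝ, r < R → IsCompact (v '' sphere (0 : EuclideanSpace ℝ (Fin n)) r) := by
    intro r hrR
    refine (isCompact_sphere 0 r).image_of_continuousOn (hcont.mono ?_)
    intro z hz
    rw [mem_sphere_zero_iff_norm] at hz
    rw [mem_ball_zero_iff, hz]
    exact hrR
  have hmem : ∀ x : EuclideanSpace ℝ (Fin n), ‖x‖ < R →
      vTilde x ∈ v '' sphere (0 : EuclideanSpace ℝ (Fin n)) ‖x‖ := by
    intro x hx
    rw [hvTilde x, hset x]
    exact (hcpt _ hx).sInf_mem ((hne _ (norm_nonneg x)).image v)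
  have hle : ∀ x z : EuclideanSpace ℝ (Fin n), ‖x‖ < R → ‖z‖ = ‖x‖ → vTilde x ≤ v z := by
    intro x z hx hz
    rw [hvTilde x, hset x]
    exact csInf_le (hcpt _ hx).bddBelow ⟨z, mem_sphere_zero_iff_norm.2 hz, rfl⟩
  -- almost uniform continuity of the radial infimum
  have step : ∀ ε > (0 : ℝ), ∀ r' : ℝ, r' < R → ∃ δ > (0 : ℝ),
      ∀ x y' : EuclideanSpace ℝ (Fin n), ‖x‖ ≤ r' → ‖y'‖ ≤ r' →
        |‖x‖ - ‖y'‖| < δ → vTilde x ≤ vTilde y' + ε := by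
    intro ε hε r' hr'
    have hsubB : closedBall (0 : EuclideanSpace ℝ (Fin n)) r' ⊆ ball 0 R := by
      intro z hz
      rw [mem_closedBall_zero_iff] at hz
      rw [mem_ball_zero_iff]
      exact lt_of_le_of_lt hz hr'
    have huc := IsCompact.uniformContinuousOn_of_continuous
      (isCompact_closedBall (0 : EuclideanSpace ℝ (Fin n)) r') (hcont.mono hsubB)
    rw [Metric.uniformContinuousOn_iff] at huc
    obtain ⟨δ, hδ, hδ'⟩ := huc ε hε
    refine ⟨δ, hδ, ?_⟩
    intro x y' hxr hyr hd
    have hxR : ‖x‖ < R := lt_of_le_of_lt hxr hr'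
    have hyR : ‖y'‖ < R := lt_of_le_of_lt hyr hr'
    obtain ⟨z, hzs, hvz⟩ := hmem y' hyR
    rw [mem_sphere_zero_iff_norm] at hzs
    -- construct a point w on the sphere of radius ‖x‖ close to z
    obtain ⟨w, hwn, hdwz⟩ : ∃ w : EuclideanSpace ℝ (Fin n),
        ‖w‖ = ‖x‖ ∧ dist w z ≤ |‖x‖ - ‖y'‖| := by
      by_cases h0 : ‖y'‖ = 0
      · have hz0 : z = 0 := norm_eq_zero.1 (by rw [hzs, h0])
        refine ⟨‖x‖ • u, by simp [norm_smul, hu, abs_of_nonneg (norm_nonneg x)], ?_⟩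
        simp [hz0, dist_zero_right, norm_smul, hu, h0, Real.norm_eq_abs,
          abs_of_nonneg (norm_nonneg x)]
      · have hy0 : 0 < ‖y'‖ := lt_of_le_of_ne (norm_nonneg y') (Ne.symm h0)
        refine ⟨(‖x‖ / ‖y'‖) • z, ?_, ?_⟩
        · rw [norm_smul, hzs, Real.norm_eq_abs,
            abs_of_nonneg (div_nonneg (norm_nonneg x) (norm_nonneg y')),
            div_mul_cancel₀ _ h0]
        · have hsub : (‖x‖ / ‖y'‖) • z - z = ((‖x‖ - ‖y'‖) / ‖y'‖) • z := by
            rw [sub_div, div_self h0, sub_smul, one_smul]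
          rw [dist_eq_norm, hsub, norm_smul, hzs, Real.norm_eq_abs, abs_div,
            abs_of_nonneg hy0.le, div_mul_cancel₀ _ h0]
    have hwmem : w ∈ closedBall (0 : EuclideanSpace ℝ (Fin n)) r' := by
      rw [mem_closedBall_zero_iff, hwn]; exact hxr
    have hzmem : z ∈ closedBall (0 : EuclideanSpace ℝ (Fin n)) r' := by
      rw [mem_closedBall_zero_iff, hzs]; exact hyr
    have hdist : dist (v w) (v z) < ε :=
      hδ' w hwmem z hzmem (lt_of_le_of_lt hdwz hd)
    have hvw : v w < v z + ε := by
      rw [Real.dist_eq] at hdist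
      have := abs_lt.1 hdist
      linarith [this.1, this.2]
    calc vTilde x ≤ v w := hle x w hxR hwn
      _ ≤ v z + ε := hvw.le
      _ = vTilde y' + ε := by rw [hvz]
  -- continuity of vTilde on the ball
  have hcont2 : ContinuousOn vTilde (ball (0 : EuclideanSpace ℝ (Fin n)) R) := by
    intro x₀ hx₀
    rw [mem_ball_zero_iff] at hx₀
    rw [Metric.continuousWithinAt_iff]
    intro ε hε
    set r' := (‖x₀‖ + R) / 2 with hr'def
    have h1 : ‖x₀‖ < r' := by rw [hr'def]; linarith
    have h2 : r' < R := by rw [hr'def]; linarith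
    obtain ⟨δ, hδ, hstep⟩ := step (ε / 2) (by linarith) r' h2
    refine ⟨min δ (r' - ‖x₀‖), lt_min hδ (by linarith), ?_⟩
    intro x hx hdx
    rw [mem_ball_zero_iff] at hx
    have hd1 : dist x x₀ < δ := lt_of_lt_of_le hdx (min_le_left _ _)
    have hd2 : dist x x₀ < r' - ‖x₀‖ := lt_of_lt_of_le hdx (min_le_right _ _)
    have hnd : ‖x - x₀‖ = dist x x₀ := (dist_eq_norm x x₀).symm
    have hxr : ‖x‖ ≤ r' := by
      have h3 : ‖x‖ - ‖x₀‖ ≤ ‖x - x₀‖ := norm_sub_norm_le x x₀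
      rw [hnd] at h3
      linarith
    have habs : |‖x‖ - ‖x₀‖| < δ := by
      have h3 : |‖x‖ - ‖x₀‖| ≤ ‖x - x₀‖ := abs_norm_sub_norm_le x x₀
      rw [hnd] at h3
      linarith
    have habs' : |‖x₀‖ - ‖x‖| < δ := by rw [abs_sub_comm]; exact habs
    have e1 : vTilde x ≤ vTilde x₀ + ε / 2 := hstep x x₀ hxr h1.le habs
    have e2 : vTilde x₀ ≤ vTilde x + ε / 2 := hstep x₀ x h1.le hxr habs'
    rw [Real.dist_eq, abs_lt]
    constructor <;> linarith
  refine ⟨hcont2, ?_⟩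
  -- super-mean-value property
  intro y ρ hρ hsubB
  have hyR : ‖y‖ < R := by
    have := hsubB (mem_closedBall_self hρ.le)
    rwa [mem_ball_zero_iff] at this
  obtain ⟨y₀, hy₀s, hy₀v⟩ := hmem y hyR
  rw [mem_sphere_zero_iff_norm] at hy₀s
  set Q : EuclideanSpace ℝ (Fin n) ≃ₗᵢ[ℝ] EuclideanSpace ℝ (Fin n) :=
    Submodule.reflection (ℝ ∙ (y - y₀))ᗮ with hQdef
  have hQy : Q y = y₀ := Submodule.reflection_sub hy₀s.symm
  have hQnorm : ∀ z, ‖Q z‖ = ‖z‖ := fun z => Q.norm_map z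
  have hsubB₀ : closedBall y₀ ρ ⊆ ball (0 : EuclideanSpace ℝ (Fin n)) R := by
    intro z hz
    rw [mem_closedBall] at hz
    have hz' : Q.symm z ∈ closedBall y ρ := by
      rw [mem_closedBall]
      calc dist (Q.symm z) y = dist (Q (Q.symm z)) (Q y) := (Q.dist_map _ _).symm
        _ = dist z y₀ := by rw [Q.apply_symm_apply, hQy]
        _ ≤ ρ := hz
    have hz'' := hsubB hz'
    rw [mem_ball_zero_iff] at hz''
    rw [mem_ball_zero_iff, ← Q.symm.norm_map z]
    exact hz''
  have hmapsQ : ∀ z ∈ closedBall y ρ, Q z ∈ closedBall y₀ ρ := by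
    intro z hz
    rw [mem_closedBall] at hz ⊢
    rw [← hQy, Q.dist_map]
    exact hz
  have hcQ : ContinuousOn (fun x => v (Q x)) (closedBall y ρ) := by
    refine hcont.comp Q.continuous.continuousOn ?_
    intro z hz
    exact ball_subset_ball le_rfl (hsubB₀ (hmapsQ z hz))
  have hintQ : IntegrableOn (fun x => v (Q x)) (ball y ρ) volume :=
    (hcQ.integrableOn_compact (isCompact_closedBall y ρ)).mono_set ball_subset_closedBall
  have hintT : IntegrableOn vTilde (ball y ρ) volume :=
    ((hcont2.mono hsubB).integrableOn_compact (isCompact_closedBall y ρ)).mono_set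
      ball_subset_closedBall
  have hpt : ∀ x ∈ ball y ρ, vTilde x ≤ v (Q x) := by
    intro x hx
    have hxR : ‖x‖ < R := by
      have := hsubB (ball_subset_closedBall hx)
      rwa [mem_ball_zero_iff] at this
    exact hle x (Q x) hxR (hQnorm x)
  have hint_le : ∫ x in ball y ρ, vTilde x ≤ ∫ x in ball y ρ, v (Q x) :=
    setIntegral_mono_on hintT hintQ measurableSet_ball hpt
  have hQmp : MeasurePreserving Q volume volume := Q.measurePreserving
  have hQemb : MeasurableEmbedding Q :=
    Q.toHomeomorph.toMeasurableEquiv.measurableEmbedding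
  have hpre : (⇑Q) ⁻¹' (ball y₀ ρ) = ball y ρ := by
    ext z
    simp only [Set.mem_preimage, mem_ball]
    rw [← hQy, Q.dist_map]
  have hci : ∫ x in ball y ρ, v (Q x) = ∫ z in ball y₀ ρ, v z := by
    rw [← hpre]
    exact hQmp.setIntegral_preimage_emb hQemb v (ball y₀ ρ)
  have hvol : volume (ball y ρ) = volume (ball y₀ ρ) := by
    rw [Measure.addHaar_ball_center volume y, Measure.addHaar_ball_center volume y₀]
  calc (volume (ball y ρ)).toReal⁻¹ * ∫ x in ball y ρ, vTilde x
      ≤ (volume (ball y ρ)).toReal⁻¹ * ∫ x in ball y ρ, v (Q x) :=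
        mul_le_mul_of_nonneg_left hint_le (by positivity)
    _ = (volume (ball y₀ ρ)).toReal⁻¹ * ∫ z in ball y₀ ρ, v z := by rw [hci, hvol]
    _ ≤ v y₀ := hsmv y₀ ρ hρ hsubB₀
    _ = vTilde y := hy₀v
end
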